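/- Two-sided increment variance bound on a compact interval: let a ∈ ℝ^N \ {0}, let i₀ be an index with a_{i₀} ≠ 0 and H_{i₀} = min{H_i : a_i ≠ 0}, and let T > 0. Then with c₁ = a_{i₀}² γ_{i₀} and c₂ = Σ_{i=1}^N a_i² ν_i T^{2(H_i − H_{i₀})} (where γ_i = 2 − 2^{2H_i−1} if H_i > 1/2 and 1 otherwise, ν_i = 1 if H_i > 1/2 and 2 − 2^{2H_i−1} otherwise), one has 0 < c₁ ≤ c₂ < ∞ and, for all s, t ∈ [0,T], c₁ |s−t|^{2H_{i₀}} ≤ f(s,t) ≤ c₂ |s−t|^{2H_{i₀}}. -/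

import Mathlib

open Real Finset

/-- The sub-fractional Brownian covariance. -/
noncomputable def subCov (H s t : ℝ) : ℝ :=
  s ^ (2 * H) + t ^ (2 * H) - (1 / 2) * ((s + t) ^ (2 * H) + |t - s| ^ (2 * H))

/-- The mixed sub-fractional covariance `C(s,t) = Σ_i a_i² c_{H_i}(s,t)`. -/
noncomputable def mixedCov (N : ℕ) (a H : Fin N → ℝ) (s t : ℝ) : ℝ :=
  ∑ i, (a i) ^ 2 * subCov (H i) s t

/-- The increment variance `f(s,t) = C(t,t) + C(s,s) − 2 C(s,t)`. -/
noncomputable def incVar (N : ℕ) (a H : Fin N → ℝ) (s t : ℝ) : ℝ :=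
  mixedCov N a H t t + mixedCov N a H s s - 2 * mixedCov N a H s t

/-- `γ_i = 2 − 2^{2H_i−1}` if `H_i > 1/2`, and `1` otherwise. -/
noncomputable def gam (h : ℝ) : ℝ := if 1 / 2 < h then 2 - (2 : ℝ) ^ (2 * h - 1) else 1

/-- `ν_i = 1` if `H_i > 1/2`, and `2 − 2^{2H_i−1}` otherwise. -/
noncomputable def nu (h : ℝ) : ℝ := if 1 / 2 < h then 1 else 2 - (2 : ℝ) ^ (2 * h - 1)

/-! ### Auxiliary convexity/concavity inequalities for real powers -/

/-- Midpoint convexity of `x ^ p` for `1 ≤ p`. -/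
lemma addpow_le_conv (p : ℝ) (hp : 1 ≤ p) {x y : ℝ} (hx : 0 ≤ x) (hy : 0 ≤ y) :
    (x + y) ^ p ≤ 2 ^ (p - 1) * (x ^ p + y ^ p) := by
  have hmid := (convexOn_rpow hp).2 (Set.mem_Ici.2 hx) (Set.mem_Ici.2 hy)
      (by norm_num : (0:ℝ) ≤ 1/2) (by norm_num : (0:ℝ) ≤ 1/2) (by norm_num)
  simp only [smul_eq_mul] at hmid
  have hm : (0:ℝ) ≤ 1/2*x + 1/2*y := by positivity
  have h2 : (x+y)^p = 2^p * (1/2*x + 1/2*y)^p := by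
    rw [← Real.mul_rpow (by norm_num) hm]; congr 1; ring
  have h3 : (2:ℝ)^(p-1) = 2^p/2 := by
    rw [Real.rpow_sub two_pos, Real.rpow_one]
  have h4 := mul_le_mul_of_nonneg_left hmid (le_of_lt (Real.rpow_pos_of_pos two_pos p))
  have h5 : (2:ℝ)^p*(1/2*x^p+1/2*y^p) = 2^p/2*(x^p+y^p) := by ring
  rw [h2, h3]; linarith

/-- Midpoint concavity of `x ^ p` for `0 ≤ p ≤ 1`. -/
lemma addpow_ge_conc (p : ℝ) (hp0 : 0 ≤ p) (hp1 : p ≤ 1) {x y : ℝ} (hx : 0 ≤ x) (hy : 0 ≤ y) :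
    2 ^ (p - 1) * (x ^ p + y ^ p) ≤ (x + y) ^ p := by
  have hmid := (Real.concaveOn_rpow hp0 hp1).2 (Set.mem_Ici.2 hx) (Set.mem_Ici.2 hy)
      (by norm_num : (0:ℝ) ≤ 1/2) (by norm_num : (0:ℝ) ≤ 1/2) (by norm_num)
  simp only [smul_eq_mul] at hmid
  have hm : (0:ℝ) ≤ 1/2*x + 1/2*y := by positivity
  have h2 : (x+y)^p = 2^p * (1/2*x + 1/2*y)^p := by
    rw [← Real.mul_rpow (by norm_num) hm]; congr 1; ring
  have h3 : (2:ℝ)^(p-1) = 2^p/2 := by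
    rw [Real.rpow_sub two_pos, Real.rpow_one]
  have h4 := mul_le_mul_of_nonneg_left hmid (le_of_lt (Real.rpow_pos_of_pos two_pos p))
  have h5 : (2:ℝ)^p*(1/2*x^p+1/2*y^p) = 2^p/2*(x^p+y^p) := by ring
  rw [h2, h3]; linarith

/-- Midpoint convexity of `x ^ q` for negative exponents `q < 0`, via AM–GM. -/
lemma addpow_le_neg (q : ℝ) (hq : q < 0) {x y : ℝ} (hx : 0 < x) (hy : 0 < y) :
    (x + y) ^ q ≤ 2 ^ (q - 1) * (x ^ q + y ^ q) := by
  have hg : Real.sqrt (x*y) ≤ (x+y)/2 := by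
    rw [show (x+y)/2 = Real.sqrt (((x+y)/2)^2) from (Real.sqrt_sq (by positivity)).symm]
    apply Real.sqrt_le_sqrt; nlinarith [sq_nonneg (x-y)]
  have hgpos : 0 < Real.sqrt (x*y) := Real.sqrt_pos.2 (by positivity)
  have h1 : ((x+y)/2)^q ≤ (Real.sqrt (x*y))^q :=
    Real.rpow_le_rpow_of_nonpos hgpos hg hq.le
  have h2 : (Real.sqrt (x*y))^q = x^(q/2) * y^(q/2) := by
    rw [Real.sqrt_eq_rpow, ← Real.rpow_mul (by positivity),
        show 1/2*q = q/2 from by ring, Real.mul_rpow hx.le hy.le]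
  have hxq : x^q = (x^(q/2))^2 := by
    rw [← Real.rpow_natCast (x^(q/2)) 2, ← Real.rpow_mul hx.le]; norm_num
  have hyq : y^q = (y^(q/2))^2 := by
    rw [← Real.rpow_natCast (y^(q/2)) 2, ← Real.rpow_mul hy.le]; norm_num
  have h3 : 2 * (x^(q/2)*y^(q/2)) ≤ x^q + y^q := by
    rw [hxq, hyq]; nlinarith [sq_nonneg (x^(q/2) - y^(q/2))]
  have h4 : (x+y)^q = 2^q * ((x+y)/2)^q := by
    rw [← Real.mul_rpow (by norm_num) (by positivity)]; congr 1; ring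
  have h3' : (2:ℝ)^(q-1) = 2^q/2 := by
    rw [Real.rpow_sub two_pos, Real.rpow_one]
  have h2pos : (0:ℝ) < 2^q := Real.rpow_pos_of_pos two_pos q
  rw [h4, h3']
  calc 2^q * ((x+y)/2)^q ≤ 2^q * (x^(q/2)*y^(q/2)) := by
        rw [← h2]; exact mul_le_mul_of_nonneg_left h1 h2pos.le
    _ ≤ 2^q/2*(x^q+y^q) := by nlinarith [h3]

/-! ### The auxiliary function `F` and its monotonicity -/

/-- For fixed `p` and increment `u`,
`Fp p u a = (2a+u)^p + (2^{p-1}-1)u^p - 2^{p-1}(a^p + (a+u)^p)`. -/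
noncomputable def Fp (p u : ℝ) : ℝ → ℝ :=
  fun a => (2*a+u)^p + ((2:ℝ)^(p-1)-1)*u^p - (2:ℝ)^(p-1)*(a^p + (a+u)^p)

lemma Fp_hasDeriv (p u x : ℝ) (hx : x ≠ 0 ∨ 1 ≤ p) (hx2 : 2*x+u ≠ 0 ∨ 1 ≤ p)
    (hx3 : x+u ≠ 0 ∨ 1 ≤ p) :
    HasDerivAt (Fp p u)
      (p*(2*(2*x+u)^(p-1) - 2^(p-1)*(x^(p-1)+(x+u)^(p-1)))) x := by
  have hlin : HasDerivAt (fun a : ℝ => 2*a+u) 2 x := by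
    simpa using ((hasDerivAt_id x).const_mul (2:ℝ)).add_const u
  have h1 := hlin.rpow_const hx2
  have h2 := Real.hasDerivAt_rpow_const hx
  have hlin3 : HasDerivAt (fun a : ℝ => a+u) 1 x := (hasDerivAt_id x).add_const u
  have h3 := hlin3.rpow_const hx3
  have h4 := (h1.add_const (((2:ℝ)^(p-1)-1)*u^p)).sub ((h2.add h3).const_mul ((2:ℝ)^(p-1)))
  refine HasDerivAt.congr_deriv h4 ?_
  ring

lemma Fp_cont (p u : ℝ) (hp : 0 < p) : Continuous (Fp p u) := by
  have cp : Continuous fun x : ℝ => x ^ p :=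
    continuous_iff_continuousAt.2 fun x => Real.continuousAt_rpow_const x p (Or.inr hp.le)
  unfold Fp
  exact ((cp.comp (by continuity)).add continuous_const).sub
    (continuous_const.mul ((cp.comp continuous_id).add (cp.comp (by continuity))))

lemma Fp_zero (p u : ℝ) (hp : 0 < p) : Fp p u 0 = 0 := by
  simp only [Fp, mul_zero, zero_add, Real.zero_rpow hp.ne']
  ring

lemma Fp_nonneg (p : ℝ) (hp1 : 1 < p) (hp2 : p < 2) {u a : ℝ} (hu : 0 ≤ u) (ha : 0 ≤ a) :
    0 ≤ Fp p u a := by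
  have hmono : MonotoneOn (Fp p u) (Set.Ici 0) := by
    apply monotoneOn_of_hasDerivWithinAt_nonneg (convex_Ici 0)
      ((Fp_cont p u (by linarith)).continuousOn)
      (f' := fun x => p*(2*(2*x+u)^(p-1) - 2^(p-1)*(x^(p-1)+(x+u)^(p-1))))
    · intro x hx
      exact (Fp_hasDeriv p u x (Or.inr hp1.le) (Or.inr hp1.le) (Or.inr hp1.le)).hasDerivWithinAt
    · intro x hx
      rw [interior_Ici] at hx
      have hx0 : (0:ℝ) < x := hx
      apply mul_nonneg (by linarith)
      have h := addpow_ge_conc (p-1) (by linarith) (by linarith) hx0.le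
          (by linarith : (0:ℝ) ≤ x + u)
      rw [show x+(x+u) = 2*x+u from by ring] at h
      have h2 : (2:ℝ)^(p-1-1) = 2^(p-1)/2 := by
        rw [Real.rpow_sub two_pos, Real.rpow_one]
      rw [h2] at h
      linarith
  have hle := hmono Set.self_mem_Ici (Set.mem_Ici.2 ha) ha
  rw [Fp_zero p u (by linarith)] at hle
  exact hle

lemma Fp_nonpos (p : ℝ) (hp0 : 0 < p) (hp1 : p < 1) {u a : ℝ} (hu : 0 ≤ u) (ha : 0 ≤ a) :
    Fp p u a ≤ 0 := by
  have hanti : AntitoneOn (Fp p u) (Set.Ici 0) := by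
    apply antitoneOn_of_hasDerivWithinAt_nonpos (convex_Ici 0)
      ((Fp_cont p u hp0).continuousOn)
      (f' := fun x => p*(2*(2*x+u)^(p-1) - 2^(p-1)*(x^(p-1)+(x+u)^(p-1))))
    · intro x hx
      rw [interior_Ici] at hx
      have hx0 : (0:ℝ) < x := hx
      exact (Fp_hasDeriv p u x (Or.inl hx0.ne') (Or.inl (by positivity))
        (Or.inl (by positivity))).hasDerivWithinAt
    · intro x hx
      rw [interior_Ici] at hx
      have hx0 : (0:ℝ) < x := hx
      apply mul_nonpos_of_nonneg_of_nonpos (by linarith)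
      have h := addpow_le_neg (p-1) (by linarith) hx0 (by linarith : (0:ℝ) < x + u)
      rw [show x+(x+u) = 2*x+u from by ring] at h
      have h2 : (2:ℝ)^(p-1-1) = 2^(p-1)/2 := by
        rw [Real.rpow_sub two_pos, Real.rpow_one]
      rw [h2] at h
      linarith
  have hle := hanti Set.self_mem_Ici (Set.mem_Ici.2 ha) ha
  rw [Fp_zero p u hp0] at hle
  exact hle

/-! ### Two-sided bounds for one sub-fractional component -/

lemma single_bounds {h : ℝ} (h0 : 0 < h) (h1 : h < 1) {s t : ℝ} (hs : 0 ≤ s) (hst : s ≤ t) :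
    gam h * (t - s) ^ (2*h) ≤ subCov h t t + subCov h s s - 2 * subCov h s t ∧
    subCov h t t + subCov h s s - 2 * subCov h s t ≤ nu h * (t - s) ^ (2*h) := by
  have ht : 0 ≤ t := hs.trans hst
  have h2h : (2*h) ≠ 0 := by positivity
  have hE : subCov h t t + subCov h s s - 2*subCov h s t
      = (t-s)^(2*h) + (s+t)^(2*h) - 2^(2*h-1)*(s^(2*h)+t^(2*h)) := by
    unfold subCov
    rw [show |t - t| = (0:ℝ) from by simp, show |s - s| = (0:ℝ) from by simp,
        abs_of_nonneg (by linarith : (0:ℝ) ≤ t - s), Real.zero_rpow h2h,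
        show t + t = 2*t from by ring, show s + s = 2*s from by ring,
        Real.mul_rpow two_pos.le ht, Real.mul_rpow two_pos.le hs,
        Real.rpow_sub two_pos, Real.rpow_one]
    ring
  rw [hE]
  have hFp : Fp (2*h) (t-s) s
      = (s+t)^(2*h) + ((2:ℝ)^(2*h-1)-1)*(t-s)^(2*h) - (2:ℝ)^(2*h-1)*(s^(2*h) + t^(2*h)) := by
    unfold Fp
    rw [show 2*s+(t-s) = s+t from by ring, show s+(t-s) = t from by ring]
  rcases lt_trichotomy h (1/2) with hc | hc | hc
  · rw [gam, if_neg (not_lt.2 hc.le), nu, if_neg (not_lt.2 hc.le)]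
    constructor
    · have := addpow_ge_conc (2*h) (by linarith) (by linarith) hs ht
      linarith
    · have := Fp_nonpos (2*h) (by linarith) (by linarith)
        (by linarith : (0:ℝ) ≤ t - s) hs
      rw [hFp] at this
      linarith
  · subst hc
    have e2 : 2*(1/2:ℝ)-1 = 0 := by norm_num
    have e1 : 2*(1/2:ℝ) = 1 := by norm_num
    rw [gam, if_neg (lt_irrefl _), nu, if_neg (lt_irrefl _), e2, e1,
        Real.rpow_one, Real.rpow_one, Real.rpow_one, Real.rpow_one, Real.rpow_zero]
    constructor <;> linarith
  · rw [gam, if_pos hc, nu, if_pos hc]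
    constructor
    · have := Fp_nonneg (2*h) (by linarith) (by linarith)
        (by linarith : (0:ℝ) ≤ t - s) hs
      rw [hFp] at this
      linarith
    · have := addpow_le_conv (2*h) (by linarith) hs ht
      linarith

/-! ### Elementary facts about `gam` and `nu` -/

lemma gam_pos {h : ℝ} (h0 : 0 < h) (h1 : h < 1) : 0 < gam h := by
  unfold gam
  split_ifs with hc
  · have : (2:ℝ)^(2*h-1) < 2^(1:ℝ) :=
      Real.rpow_lt_rpow_of_exponent_lt one_lt_two (by linarith)
    rw [Real.rpow_one] at this
    linarith
  · norm_num

lemma gam_le_nu {h : ℝ} (h0 : 0 < h) (h1 : h < 1) : gam h ≤ nu h := by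
  unfold gam nu
  split_ifs with hc
  · have : (1:ℝ) ≤ 2^(2*h-1) := Real.one_le_rpow one_le_two (by linarith)
    linarith
  · have : (2:ℝ)^(2*h-1) ≤ 1 :=
      Real.rpow_le_one_of_one_le_of_nonpos one_le_two (by linarith [not_lt.1 hc])
    linarith

lemma nu_pos {h : ℝ} (h0 : 0 < h) (h1 : h < 1) : 0 < nu h :=
  lt_of_lt_of_le (gam_pos h0 h1) (gam_le_nu h0 h1)

/-! ### Symmetry and summation form of the increment variance -/

lemma subCov_symm (h s t : ℝ) : subCov h s t = subCov h t s := by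
  unfold subCov; rw [abs_sub_comm, add_comm s t]; ring

lemma mixedCov_symm (N : ℕ) (a H : Fin N → ℝ) (s t : ℝ) :
    mixedCov N a H s t = mixedCov N a H t s :=
  Finset.sum_congr rfl fun i _ => by rw [subCov_symm]

lemma incVar_symm (N : ℕ) (a H : Fin N → ℝ) (s t : ℝ) :
    incVar N a H s t = incVar N a H t s := by
  unfold incVar
  rw [mixedCov_symm N a H s t]
  ring

lemma incVar_eq (N : ℕ) (a H : Fin N → ℝ) (s t : ℝ) : incVar N a H s t
    = ∑ i, (a i)^2 * (subCov (H i) t t + subCov (H i) s s - 2*subCov (H i) s t) := by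
  unfold incVar mixedCov
  rw [← Finset.sum_add_distrib, Finset.mul_sum, ← Finset.sum_sub_distrib]
  exact Finset.sum_congr rfl fun i _ => by ring

/-- The main two-sided bound in the ordered case `0 ≤ s ≤ t ≤ T`. -/
theorem msfbm_main_le (N : ℕ) (a H : Fin N → ℝ)
    (hH : ∀ i, H i ∈ Set.Ioo (0 : ℝ) 1)
    (i₀ : Fin N) (hmin : ∀ i, a i ≠ 0 → H i₀ ≤ H i)
    (T : ℝ) (hT : 0 < T) {s t : ℝ} (hs : 0 ≤ s) (hst : s ≤ t) (htT : t ≤ T) :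
    (a i₀) ^ 2 * gam (H i₀) * (t - s) ^ (2 * H i₀) ≤ incVar N a H s t ∧
      incVar N a H s t ≤
        (∑ i, (a i) ^ 2 * nu (H i) * T ^ (2 * (H i - H i₀))) * (t - s) ^ (2 * H i₀) := by
  have ht : 0 ≤ t := hs.trans hst
  have hd0 : 0 ≤ t - s := by linarith
  rw [incVar_eq]
  constructor
  · have hterm_nonneg : ∀ i ∈ Finset.univ, (0:ℝ) ≤
        (a i)^2 * (subCov (H i) t t + subCov (H i) s s - 2*subCov (H i) s t) := by
      intro i _
      apply mul_nonneg (sq_nonneg _)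
      refine le_trans ?_ (single_bounds (hH i).1 (hH i).2 hs hst).1
      have := gam_pos (hH i).1 (hH i).2
      positivity
    have h0 := Finset.single_le_sum hterm_nonneg (Finset.mem_univ i₀)
    calc (a i₀)^2 * gam (H i₀) * (t-s)^(2*H i₀)
        = (a i₀)^2 * (gam (H i₀)*(t-s)^(2*H i₀)) := by ring
      _ ≤ (a i₀)^2 * (subCov (H i₀) t t + subCov (H i₀) s s - 2*subCov (H i₀) s t) :=
          mul_le_mul_of_nonneg_left (single_bounds (hH i₀).1 (hH i₀).2 hs hst).1 (sq_nonneg _)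
      _ ≤ _ := h0
  · rw [Finset.sum_mul]
    apply Finset.sum_le_sum
    intro i _
    by_cases hai : a i = 0
    · simp [hai]
    · have hHle := hmin i hai
      have hnu := (nu_pos (hH i).1 (hH i).2).le
      have hpow : (t-s)^(2*H i) ≤ T^(2*(H i - H i₀)) * (t-s)^(2*H i₀) := by
        rcases eq_or_lt_of_le hd0 with hd | hd
        · rw [← hd, Real.zero_rpow (by have := (hH i).1; positivity),
              Real.zero_rpow (by have := (hH i₀).1; positivity), mul_zero]
        · have hsplit : (t-s)^(2*H i) = (t-s)^(2*(H i - H i₀)) * (t-s)^(2*H i₀) := by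
            rw [← Real.rpow_add hd]; congr 1; ring
          rw [hsplit]
          apply mul_le_mul_of_nonneg_right _ (Real.rpow_nonneg hd0 _)
          exact Real.rpow_le_rpow hd0 (by linarith) (by linarith)
      calc (a i)^2 * (subCov (H i) t t + subCov (H i) s s - 2*subCov (H i) s t)
          ≤ (a i)^2 * (nu (H i) * (t-s)^(2*H i)) :=
            mul_le_mul_of_nonneg_left (single_bounds (hH i).1 (hH i).2 hs hst).2 (sq_nonneg _)
        _ ≤ (a i)^2 * (nu (H i) * (T^(2*(H i - H i₀)) * (t-s)^(2*H i₀))) := by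
            apply mul_le_mul_of_nonneg_left _ (sq_nonneg _)
            exact mul_le_mul_of_nonneg_left hpow hnu
        _ = (a i)^2 * nu (H i) * T^(2*(H i - H i₀)) * (t-s)^(2*H i₀) := by ring

/-- Two-sided increment variance bound on `[0,T]`: with `c₁ = a_{i₀}² γ_{i₀}` and
`c₂ = Σ_i a_i² ν_i T^{2(H_i−H_{i₀})}`, one has `0 < c₁ ≤ c₂` and
`c₁ |s−t|^{2H_{i₀}} ≤ f(s,t) ≤ c₂ |s−t|^{2H_{i₀}}` for all `s, t ∈ [0,T]`. -/
theorem msfbm_increment_variance_two_sided (N : ℕ) (a H : Fin N → ℝ)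
    (hH : ∀ i, H i ∈ Set.Ioo (0 : ℝ) 1) (ha : a ≠ 0)
    (i₀ : Fin N) (hai₀ : a i₀ ≠ 0) (hmin : ∀ i, a i ≠ 0 → H i₀ ≤ H i)
    (T : ℝ) (hT : 0 < T) :
    0 < (a i₀) ^ 2 * gam (H i₀) ∧
    (a i₀) ^ 2 * gam (H i₀) ≤ ∑ i, (a i) ^ 2 * nu (H i) * T ^ (2 * (H i - H i₀)) ∧
    ∀ s ∈ Set.Icc (0 : ℝ) T, ∀ t ∈ Set.Icc (0 : ℝ) T,
      (a i₀) ^ 2 * gam (H i₀) * |s - t| ^ (2 * H i₀) ≤ incVar N a H s t ∧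
      incVar N a H s t ≤
        (∑ i, (a i) ^ 2 * nu (H i) * T ^ (2 * (H i - H i₀))) * |s - t| ^ (2 * H i₀) := by
  have hsq : (0:ℝ) < (a i₀)^2 := by positivity
  refine ⟨mul_pos hsq (gam_pos (hH i₀).1 (hH i₀).2), ?_, ?_⟩
  · have hterm : ∀ i ∈ Finset.univ, (0:ℝ) ≤ (a i)^2 * nu (H i) * T^(2*(H i - H i₀)) := by
      intro i _
      have := (nu_pos (hH i).1 (hH i).2).le
      have := (Real.rpow_pos_of_pos hT (2*(H i - H i₀))).le
      positivity
    have hsum := Finset.single_le_sum hterm (Finset.mem_univ i₀)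
    rw [show 2*(H i₀ - H i₀) = 0 from by ring, Real.rpow_zero, mul_one] at hsum
    refine le_trans ?_ hsum
    exact mul_le_mul_of_nonneg_left (gam_le_nu (hH i₀).1 (hH i₀).2) (sq_nonneg _)
  · intro s hsm t htm
    rcases le_total s t with hle | hle
    · rw [show |s - t| = t - s from by rw [abs_sub_comm]; exact abs_of_nonneg (by linarith)]
      exact msfbm_main_le N a H hH i₀ hmin T hT hsm.1 hle htm.2
    · rw [show |s - t| = s - t from abs_of_nonneg (by linarith), incVar_symm]
      exact msfbm_main_le N a H hH i₀ hmin T hT htm.1 hle hsm.2
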